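/- The geometric phase accumulated by a coherent state whose amplitude is rotated by angle π in time T equals π|α|²: for α ∈ ℂ and T > 0, setting α(t) = α e^{iπt/T} and c_n(t) = e^{−|α|²/2} α(t)ⁿ/√(n!), one has −i ∫₀^T ( ∑_{n=0}^∞ conj(c_n(t)) · (d/dt) c_n(t) ) dt = π|α|². -/

import Mathlib

open scoped ComplexConjugate Real

/-- The Fock-basis coefficients of the rotated coherent state `|α e^{iπt/T}⟩`:
`c_n(t) = e^{−|α|²/2} (α e^{iπt/T})ⁿ/√(n!)`. -/
noncomputable def rotCoeff (α : ℂ) (T : ℝ) (n : ℕ) (t : ℝ) : ℂ :=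
  (Real.exp (-(‖α‖) ^ 2 / 2) : ℝ)
    * (α * Complex.exp (Complex.I * (π : ℂ) * (t : ℂ) / (T : ℂ))) ^ n
    / ((Real.sqrt n.factorial : ℝ) : ℂ)

lemma rotCoeff_eq (α : ℂ) (T : ℝ) (n : ℕ) (t : ℝ) :
    rotCoeff α T n t =
      ((Real.exp (-(‖α‖) ^ 2 / 2) : ℝ) : ℂ) * α ^ n
        / ((Real.sqrt n.factorial : ℝ) : ℂ)
        * Complex.exp (((n : ℂ) * Complex.I * (π : ℂ) / (T : ℂ)) * (t : ℂ)) := by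
  unfold rotCoeff
  rw [mul_pow, ← Complex.exp_nat_mul]
  have : (n : ℂ) * (Complex.I * (π : ℂ) * (t : ℂ) / (T : ℂ))
      = ((n : ℂ) * Complex.I * (π : ℂ) / (T : ℂ)) * (t : ℂ) := by ring
  rw [this]; ring

lemma rotCoeff_hasDerivAt (α : ℂ) (T : ℝ) (n : ℕ) (t : ℝ) :
    HasDerivAt (rotCoeff α T n)
      (rotCoeff α T n t * ((n : ℂ) * Complex.I * (π : ℂ) / (T : ℂ))) t := by
  set c : ℂ := (n : ℂ) * Complex.I * (π : ℂ) / (T : ℂ) with hc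
  set K : ℂ := ((Real.exp (-(‖α‖) ^ 2 / 2) : ℝ) : ℂ) * α ^ n
      / ((Real.sqrt n.factorial : ℝ) : ℂ) with hK
  have hfun : rotCoeff α T n = fun s : ℝ => K * Complex.exp (c * s) := by
    funext s; exact rotCoeff_eq α T n s
  have h1 : HasDerivAt (fun z : ℂ => Complex.exp (c * z))
      (Complex.exp (c * t) * c) (t : ℂ) := by
    have := (Complex.hasDerivAt_exp (c * t)).comp (t : ℂ)
      ((hasDerivAt_id (t : ℂ)).const_mul c)
    simpa [Function.comp_def] using this
  have h2 : HasDerivAt (fun s : ℝ => Complex.exp (c * s))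
      (Complex.exp (c * t) * c) t := h1.comp_ofReal
  have h3 := h2.const_mul K
  rw [hfun]
  simpa [mul_assoc] using h3

lemma conj_mul_deriv (α : ℂ) (T : ℝ) (n : ℕ) (t : ℝ) :
    conj (rotCoeff α T n t) * deriv (rotCoeff α T n) t
      = ((Real.exp (-(‖α‖) ^ 2) * (‖α‖) ^ (2 * n)
          / n.factorial : ℝ) : ℂ) * ((n : ℂ) * Complex.I * (π : ℂ) / (T : ℂ)) := by
  rw [(rotCoeff_hasDerivAt α T n t).deriv, ← mul_assoc]
  congr 1
  have : conj (rotCoeff α T n t) * rotCoeff α T n t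
      = ((‖rotCoeff α T n t‖) ^ 2 : ℝ) := by
    rw [mul_comm, Complex.mul_conj, Complex.normSq_eq_norm_sq]
  rw [this]
  congr 1
  rw [rotCoeff_eq]
  have habs : ‖Complex.exp (((n : ℂ) * Complex.I * (π : ℂ) / (T : ℂ)) * (t : ℂ))‖ = 1 := by
    rw [Complex.norm_exp]
    have : (((n : ℂ) * Complex.I * (π : ℂ) / (T : ℂ)) * (t : ℂ)).re = 0 := by
      simp [Complex.div_re, Complex.mul_re, Complex.mul_im]
    rw [this, Real.exp_zero]
  rw [norm_mul, habs, mul_one, norm_div, norm_mul, norm_pow, Complex.norm_real, Real.norm_eq_abs,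
    Complex.norm_real, Real.norm_eq_abs]
  have h1 : |Real.exp (-(‖α‖) ^ 2 / 2)| = Real.exp (-(‖α‖) ^ 2 / 2) :=
    abs_of_pos (Real.exp_pos _)
  have h2 : |Real.sqrt n.factorial| = Real.sqrt n.factorial :=
    abs_of_nonneg (Real.sqrt_nonneg _)
  rw [h1, h2, div_pow, mul_pow, ← Real.exp_nat_mul]
  rw [Real.sq_sqrt (by positivity : (0:ℝ) ≤ (n.factorial : ℝ))]
  rw [← pow_mul]
  congr 2
  · congr 1; push_cast; ring
  · ring

lemma tsum_n_pow_div_factorial (r : ℝ) :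
    ∑' n : ℕ, (n : ℝ) * r ^ n / n.factorial = r * Real.exp r := by
  have key : ∀ n : ℕ, ((n + 1 : ℕ) : ℝ) * r ^ (n + 1) / (n + 1).factorial
      = r * (r ^ n / n.factorial) := by
    intro n
    rw [Nat.factorial_succ]
    have h1 : ((n.factorial : ℝ)) ≠ 0 := by positivity
    push_cast
    field_simp
    ring
  have hsumm1 : Summable (fun n : ℕ => r * (r ^ n / n.factorial)) :=
    (Real.summable_pow_div_factorial r).mul_left r
  have hsumm : Summable (fun n : ℕ => (n : ℝ) * r ^ n / n.factorial) := by
    rw [← summable_nat_add_iff 1]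
    convert hsumm1 using 2 with n
    · rfl
    · exact_mod_cast key _
  rw [Summable.tsum_eq_zero_add hsumm]
  simp only [Nat.cast_zero, zero_mul, zero_div, zero_add]
  have h5 : (∑' n : ℕ, (((n + 1 : ℕ)) : ℝ) * r ^ (n + 1) / (((n + 1).factorial : ℝ)))
      = ∑' n : ℕ, r * (r ^ n / n.factorial) :=
    tsum_congr fun n => key n
  rw [h5, tsum_mul_left]
  congr 1
  rw [Real.exp_eq_exp_ℝ, NormedSpace.exp_eq_tsum_div]

/-- The geometric (Berry) phase accumulated by a coherent state whose amplitude is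
rotated by an angle `π` in time `T` equals `π|α|²`:
`−i ∫₀ᵀ ⟨α(t)| d/dt |α(t)⟩ dt = π|α|²`, where
`⟨α(t)| d/dt |α(t)⟩ = ∑ₙ conj(c_n(t)) c_n′(t)`. -/
theorem coherent_geometric_phase (α : ℂ) (T : ℝ) (hT : 0 < T) :
    (-Complex.I) * (∫ t in (0 : ℝ)..T,
        ∑' n : ℕ, conj (rotCoeff α T n t) * deriv (rotCoeff α T n) t)
      = (π : ℂ) * ((‖α‖ : ℝ) : ℂ) ^ 2 := by
  set a : ℝ := ‖α‖ with ha
  have hT' : (T : ℂ) ≠ 0 := by exact_mod_cast hT.ne'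
  have hts : ∀ t : ℝ, (∑' n : ℕ, conj (rotCoeff α T n t) * deriv (rotCoeff α T n) t)
      = Complex.I * (π : ℂ) * (a : ℂ) ^ 2 / (T : ℂ) := by
    intro t
    have h1 : (∑' n : ℕ, conj (rotCoeff α T n t) * deriv (rotCoeff α T n) t)
        = ∑' n : ℕ, ((Real.exp (-a ^ 2) * a ^ (2 * n) / n.factorial : ℝ) : ℂ)
            * ((n : ℂ) * Complex.I * (π : ℂ) / (T : ℂ)) :=
      tsum_congr fun n => conj_mul_deriv α T n t
    rw [h1]
    have h2 : ∀ n : ℕ, ((Real.exp (-a ^ 2) * a ^ (2 * n) / n.factorial : ℝ) : ℂ)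
        * ((n : ℂ) * Complex.I * (π : ℂ) / (T : ℂ))
        = (Complex.I * (π : ℂ) / (T : ℂ)) *
          (((n : ℝ) * Real.exp (-a ^ 2) * a ^ (2 * n) / n.factorial : ℝ) : ℂ) := by
      intro n; push_cast; ring
    rw [tsum_congr h2, tsum_mul_left, ← Complex.ofReal_tsum]
    have h3 : (∑' n : ℕ, ((n : ℝ) * Real.exp (-a ^ 2) * a ^ (2 * n) / n.factorial))
        = a ^ 2 := by
      have h4 : ∀ n : ℕ, (n : ℝ) * Real.exp (-a ^ 2) * a ^ (2 * n) / n.factorial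
          = Real.exp (-a ^ 2) * ((n : ℝ) * (a ^ 2) ^ n / n.factorial) := by
        intro n; rw [pow_mul]; ring
      rw [tsum_congr h4, tsum_mul_left, tsum_n_pow_div_factorial,
        ← mul_assoc, mul_comm (Real.exp (-a ^ 2)) (a ^ 2), mul_assoc,
        ← Real.exp_add]
      simp
    rw [h3]; push_cast; ring
  have hint : (∫ t in (0 : ℝ)..T,
      ∑' n : ℕ, conj (rotCoeff α T n t) * deriv (rotCoeff α T n) t)
      = T • (Complex.I * (π : ℂ) * (a : ℂ) ^ 2 / (T : ℂ)) := by
    rw [intervalIntegral.integral_congr (g := fun _ => Complex.I * (π : ℂ) * (a : ℂ) ^ 2 / (T : ℂ))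
      (fun t _ => hts t)]
    simp only [intervalIntegral.integral_const, sub_zero]
  rw [hint, Complex.real_smul]
  have hc : (T : ℂ) * (Complex.I * (π : ℂ) * (a : ℂ) ^ 2 / (T : ℂ))
      = Complex.I * (π : ℂ) * (a : ℂ) ^ 2 := by
    field_simp
  rw [hc]
  have hI : Complex.I * Complex.I = -1 := Complex.I_mul_I
  linear_combination (-(π : ℂ) * (a : ℂ) ^ 2) * hI
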